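/- Let H : ℝ^m → ℝ be real analytic at 0, with power series expansion H = ∑_k H_k on a neighbourhood of 0, where H_k(x) = p_k(x, …, x) is the homogeneous part of degree k given by the k-th term p_k of the formal multilinear series of H at 0. Let A : ℝ^m → ℝ^m be a linear map, and suppose that the derivative of H in the direction A x vanishes near 0, i.e. dH(x)·(A x) = 0 for all x in some neighbourhood of 0. Then for every k, dH_k(x)·(A x) = 0 for all x ∈ ℝ^m. -/

import Mathlib

open Filter

open FormalMultilinearSeries in
lemma derivSeries_apply_diag' {𝕜 : Type*} [NontriviallyNormedField 𝕜]
    {E : Type*} [NormedAddCommGroup E] [NormedSpace 𝕜 E]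
    {F : Type*} [NormedAddCommGroup F] [NormedSpace 𝕜 F]
    (p : FormalMultilinearSeries 𝕜 E F) (n : ℕ) (x v : E) :
    p.derivSeries n (fun _ ↦ x) v
      = ∑ i : Fin (1 + n), p (1 + n) (Function.update (fun _ ↦ x) i v) := by
  classical
  simp only [derivSeries, ContinuousLinearMap.compFormalMultilinearSeries_apply,
    changeOriginSeries,
    ContinuousLinearMap.compContinuousMultilinearMap_coe, ContinuousLinearEquiv.coe_coe,
    LinearIsometryEquiv.coe_coe, Function.comp_apply, ContinuousMultilinearMap.sum_apply, map_sum,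
    ContinuousLinearMap.coe_sum', Finset.sum_apply,
    continuousMultilinearCurryFin1_apply, Matrix.zero_empty]
  refine (Fintype.sum_bijective (fun i : Fin (1 + n) => (⟨{i}ᶜ, by
      rw [Finset.card_compl]; simp⟩ :
      {s : Finset (Fin (1 + n)) // s.card = n})) ⟨?_, ?_⟩ _ _ fun i => ?_).symm
  · intro i j hij
    have h1 : ({i}ᶜ : Finset (Fin (1 + n))) = {j}ᶜ := congrArg Subtype.val hij
    exact Finset.singleton_injective (compl_injective h1)
  · rintro ⟨s, hs⟩
    have h : sᶜ.card = 1 := by rw [Finset.card_compl, hs]; simp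
    obtain ⟨a, ha⟩ := Finset.card_eq_one.mp h
    exact ⟨a, Subtype.ext (by simp only [← ha, compl_compl])⟩
  · have hsnoc : (Fin.snoc ![] v : Fin 1 → E) = fun _ => v := by
      funext j
      obtain rfl : j = Fin.last 0 := by omega
      simp [Fin.snoc]
    rw [hsnoc, changeOriginSeriesTerm_apply]
    congr 1
    funext j
    by_cases hj : j = i
    · subst hj; simp [Finset.piecewise]
    · simp [Finset.piecewise, hj, Function.update_of_ne hj]

lemma sum_update_diag_congr {𝕜 : Type*} [NontriviallyNormedField 𝕜]
    {E : Type*} [NormedAddCommGroup E] [NormedSpace 𝕜 E]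
    {F : Type*} [NormedAddCommGroup F] [NormedSpace 𝕜 F]
    (p : FormalMultilinearSeries 𝕜 E F) {a b : ℕ} (h : a = b) (x v : E) :
    ∑ i : Fin a, p a (Function.update (fun _ ↦ x) i v)
      = ∑ i : Fin b, p b (Function.update (fun _ ↦ x) i v) := by
  subst h; rfl

/-- If `H : ℝᵐ → ℝ` is real analytic at `0` with power series `H = ∑ₖ Hₖ`, where
`Hₖ(x) = pₖ(x, …, x)`, `A : ℝᵐ → ℝᵐ` is linear, and `dH(x)·(A x) = 0` for all `x` in a
neighbourhood of `0`, then `dHₖ(x)·(A x) = 0` for every `k` and every `x ∈ ℝᵐ`. -/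
theorem homogeneous_parts_annihilated
    {m : ℕ} (H : (Fin m → ℝ) → ℝ)
    (p : FormalMultilinearSeries ℝ (Fin m → ℝ) ℝ)
    (hp : HasFPowerSeriesAt H p 0)
    (A : (Fin m → ℝ) →ₗ[ℝ] (Fin m → ℝ))
    (hH : ∀ᶠ x in nhds (0 : Fin m → ℝ), fderiv ℝ H x (A x) = 0) :
    ∀ (k : ℕ) (x : Fin m → ℝ),
      fderiv ℝ (fun y => p k (fun _ => y)) x (A x) = 0 := by
  classical
  intro k x
  -- the key vanishing of the derivative-series coefficients
  set ψ : ℝ → ℝ := fun t => fderiv ℝ H (t • x) (A x) with hψdef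
  set c : ℕ → ℝ := fun n => p.derivSeries n (fun _ => x) (A x) with hcdef
  set q : FormalMultilinearSeries ℝ ℝ ℝ :=
    fun n => ContinuousMultilinearMap.mkPiRing ℝ (Fin n) (c n) with hqdef
  have hqcoeff : ∀ n, q.coeff n = c n := by
    intro n
    simp [hqdef, FormalMultilinearSeries.coeff]
  obtain ⟨r, hr⟩ := hp
  have hd : HasFPowerSeriesOnBall (fderiv ℝ H) p.derivSeries 0 r := hr.fderiv
  have hsmall : ∀ᶠ t : ℝ in nhds 0, t • x ∈ EMetric.ball (0 : Fin m → ℝ) r := by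
    have hten : Filter.Tendsto (fun t : ℝ => t • x) (nhds 0) (nhds 0) := by
      exact (continuous_id.smul (continuous_const (y := x))).tendsto' (0 : ℝ) 0 (by simp)
    exact hten.eventually_mem (EMetric.ball_mem_nhds 0 hd.r_pos)
  have hq : HasFPowerSeriesAt ψ q 0 := by
    rw [hasFPowerSeriesAt_iff]
    filter_upwards [hsmall] with t ht
    have hsum := (hd.hasSum ht).mapL (ContinuousLinearMap.apply ℝ ℝ (A x))
    simp only [zero_add, ContinuousLinearMap.apply_apply] at hsum
    have heq : (fun n => (p.derivSeries n fun _ => t • x) (A x))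
        = fun n => t ^ n • q.coeff n := by
      funext n
      have h1 : (fun _ : Fin n => t • x) = fun i : Fin n => t • (fun _ : Fin n => x) i := rfl
      rw [h1, (p.derivSeries n).map_smul_univ (fun _ : Fin n => t) (fun _ => x)]
      simp [hqcoeff, smul_smul]
      exact Or.inl rfl
    rw [heq] at hsum
    simpa using hsum
  have hψ00 : ∀ᶠ t : ℝ in nhds 0, t * ψ t = 0 := by
    have hten : Filter.Tendsto (fun t : ℝ => t • x) (nhds 0) (nhds 0) := by
      exact (continuous_id.smul (continuous_const (y := x))).tendsto' (0 : ℝ) 0 (by simp)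
    filter_upwards [hten.eventually hH] with t ht
    have hA : A (t • x) = t • (A x) := map_smul A t x
    rw [hA] at ht
    simpa [hψdef, smul_eq_mul] using ht
  have hψ0 : ψ 0 = 0 := by
    have h1 : Filter.Tendsto ψ (nhdsWithin (0 : ℝ) {(0 : ℝ)}ᶜ) (nhds (ψ 0)) :=
      (hq.continuousAt.tendsto).mono_left nhdsWithin_le_nhds
    have h2 : Filter.Tendsto ψ (nhdsWithin (0 : ℝ) {(0 : ℝ)}ᶜ) (nhds 0) := by
      apply Filter.Tendsto.congr' _ tendsto_const_nhds
      filter_upwards [eventually_nhdsWithin_of_eventually_nhds hψ00,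
        self_mem_nhdsWithin] with t ht ht0
      exact ((mul_eq_zero.mp ht).resolve_left ht0).symm
    exact tendsto_nhds_unique h1 h2
  have hψz : ψ =ᶠ[nhds (0 : ℝ)] 0 := by
    filter_upwards [hψ00] with t ht
    rcases eq_or_ne t 0 with rfl | ht0
    · exact hψ0
    · exact (mul_eq_zero.mp ht).resolve_left ht0
  have hq0 : q = 0 := hq.eq_zero_of_eventually hψz
  have hc0 : ∀ n, c n = 0 := by
    intro n
    rw [← hqcoeff n, hq0]
    simp [FormalMultilinearSeries.coeff]
  -- now compute the derivative of the diagonal of `p k`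
  have hderiv : HasFDerivAt (fun y => p k (fun _ => y))
      (∑ i : Fin k, ((p k).toContinuousLinearMap (fun _ => x) i) ∘L
        (ContinuousLinearMap.id ℝ (Fin m → ℝ))) x := by
    exact HasFDerivAt.multilinear_comp (p k) (g := fun _ y => y)
      (g' := fun _ => ContinuousLinearMap.id ℝ (Fin m → ℝ)) (fun _ => hasFDerivAt_id x)
  rw [hderiv.fderiv]
  simp only [ContinuousLinearMap.coe_sum', Finset.sum_apply, ContinuousLinearMap.coe_comp',
    Function.comp_apply, ContinuousLinearMap.coe_id', id_eq,
    ContinuousMultilinearMap.toContinuousLinearMap_apply]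
  rcases Nat.eq_zero_or_pos k with rfl | hk
  · simp
  obtain ⟨n, rfl⟩ : ∃ n, k = n + 1 := ⟨k - 1, (Nat.succ_pred_eq_of_pos hk).symm⟩
  have := hc0 n
  rw [hcdef] at this
  simp only [derivSeries_apply_diag' p n x (A x)] at this
  rw [sum_update_diag_congr p (by omega : n + 1 = 1 + n) x (A x)]
  exact this
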